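/- Let K ⊆ ℝ² be the attractor of the IFS {φ_1, …, φ_9} where φ_1(x) = x/6 + (−15/8, 15/8), φ_2(x) = x/6 + (−5/2, −5/4), φ_3(x) = (1/6)R_{3π/2}x + (−5/4, −5/4), φ_4(x) = (1/6)R_{π/2}x + (−5/2, −5/2), φ_5(x) = (1/6)R_π x + (−5/4, −5/2), φ_6(x) = x/6 + (5/4, −5/4), φ_7(x) = (1/6)R_{3π/2}x + (5/2, −5/4), φ_8(x) = (1/6)R_{π/2}x + (5/4, −5/2), φ_9(x) = (1/6)R_π x + (5/2, −5/2). Let f(x) = x/6 + (15/8, −15/8). Then f(K) ⊆ K. -/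

import Mathlib

open Real

/-- Rotation of `ℝ²` by angle `θ` counterclockwise about the origin. -/
noncomputable def rot2 (θ : ℝ) (p : ℝ × ℝ) : ℝ × ℝ :=
  (Real.cos θ * p.1 - Real.sin θ * p.2, Real.sin θ * p.1 + Real.cos θ * p.2)

/-- The nine similitudes `φ_1, …, φ_9` of Example 2.6 (indexed by `0, …, 8`). -/
noncomputable def exPhi : Fin 9 → ℝ × ℝ → ℝ × ℝ :=
  ![fun p => (1/6 : ℝ) • p + (-(15/8 : ℝ), (15/8 : ℝ)),
    fun p => (1/6 : ℝ) • p + (-(5/2 : ℝ), -(5/4 : ℝ)),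
    fun p => (1/6 : ℝ) • rot2 (3*π/2) p + (-(5/4 : ℝ), -(5/4 : ℝ)),
    fun p => (1/6 : ℝ) • rot2 (π/2) p + (-(5/2 : ℝ), -(5/2 : ℝ)),
    fun p => (1/6 : ℝ) • rot2 π p + (-(5/4 : ℝ), -(5/2 : ℝ)),
    fun p => (1/6 : ℝ) • p + ((5/4 : ℝ), -(5/4 : ℝ)),
    fun p => (1/6 : ℝ) • rot2 (3*π/2) p + ((5/2 : ℝ), -(5/4 : ℝ)),
    fun p => (1/6 : ℝ) • rot2 (π/2) p + ((5/4 : ℝ), -(5/2 : ℝ)),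
    fun p => (1/6 : ℝ) • rot2 π p + ((5/2 : ℝ), -(5/2 : ℝ))]

/-- The similitude `f(x) = x/6 + (15/8, −15/8)` of Example 2.6. -/
noncomputable def exF : ℝ × ℝ → ℝ × ℝ :=
  fun p => (1/6 : ℝ) • p + ((15/8 : ℝ), -(15/8 : ℝ))

/- Auxiliary lemmas -/

lemma rot2_pi_div_two (p : ℝ × ℝ) : rot2 (π/2) p = (-p.2, p.1) := by
  simp [rot2]

lemma rot2_pi' (p : ℝ × ℝ) : rot2 π p = (-p.1, -p.2) := by
  simp [rot2]

lemma rot2_three_pi_div_two (p : ℝ × ℝ) : rot2 (3*π/2) p = (p.2, -p.1) := by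
  have h : 3*π/2 = π + π/2 := by ring
  simp [rot2, h, Real.cos_add, Real.sin_add]

lemma exPhi0_eq : exPhi 0 = fun p => (1/6 : ℝ) • p + (-(15/8 : ℝ), (15/8 : ℝ)) := rfl
lemma exPhi1_eq : exPhi 1 = fun p => (1/6 : ℝ) • p + (-(5/2 : ℝ), -(5/4 : ℝ)) := rfl
lemma exPhi2_eq : exPhi 2 = fun p => (1/6 : ℝ) • rot2 (3*π/2) p + (-(5/4 : ℝ), -(5/4 : ℝ)) := rfl
lemma exPhi3_eq : exPhi 3 = fun p => (1/6 : ℝ) • rot2 (π/2) p + (-(5/2 : ℝ), -(5/2 : ℝ)) := rfl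
lemma exPhi4_eq : exPhi 4 = fun p => (1/6 : ℝ) • rot2 π p + (-(5/4 : ℝ), -(5/2 : ℝ)) := rfl
lemma exPhi5_eq : exPhi 5 = fun p => (1/6 : ℝ) • p + ((5/4 : ℝ), -(5/4 : ℝ)) := rfl
lemma exPhi6_eq : exPhi 6 = fun p => (1/6 : ℝ) • rot2 (3*π/2) p + ((5/2 : ℝ), -(5/4 : ℝ)) := rfl
lemma exPhi7_eq : exPhi 7 = fun p => (1/6 : ℝ) • rot2 (π/2) p + ((5/4 : ℝ), -(5/2 : ℝ)) := rfl
lemma exPhi8_eq : exPhi 8 = fun p => (1/6 : ℝ) • rot2 π p + ((5/2 : ℝ), -(5/2 : ℝ)) := rfl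

lemma smul_prod' (r : ℝ) (p : ℝ × ℝ) : r • p = (r * p.1, r * p.2) := rfl
lemma add_prod' (p q : ℝ × ℝ) : p + q = (p.1 + q.1, p.2 + q.2) := rfl

/-- Key algebraic identities: `f ∘ φ₁ = φ₆ ∘ f` and the other eight compositions. -/
lemma key0 (p : ℝ × ℝ) : exF (exPhi 0 p) = exPhi 5 (exF p) := by
  simp only [exF, exPhi0_eq, exPhi5_eq, smul_prod', add_prod', Prod.mk.injEq]
  constructor <;> ring

lemma key1 (p : ℝ × ℝ) : exF (exPhi 1 p) = exPhi 7 (exPhi 6 p) := by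
  simp only [exF, exPhi1_eq, exPhi7_eq, exPhi6_eq, rot2_pi_div_two, rot2_three_pi_div_two,
    smul_prod', add_prod', Prod.mk.injEq]
  constructor <;> ring

lemma key2 (p : ℝ × ℝ) : exF (exPhi 2 p) = exPhi 7 (exPhi 8 p) := by
  simp only [exF, exPhi2_eq, exPhi7_eq, exPhi8_eq, rot2_pi_div_two, rot2_three_pi_div_two,
    rot2_pi', smul_prod', add_prod', Prod.mk.injEq]
  constructor <;> ring

lemma key3 (p : ℝ × ℝ) : exF (exPhi 3 p) = exPhi 7 (exPhi 5 p) := by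
  simp only [exF, exPhi3_eq, exPhi7_eq, exPhi5_eq, rot2_pi_div_two,
    smul_prod', add_prod', Prod.mk.injEq]
  constructor <;> ring

lemma key4 (p : ℝ × ℝ) : exF (exPhi 4 p) = exPhi 7 (exPhi 7 p) := by
  simp only [exF, exPhi4_eq, exPhi7_eq, rot2_pi_div_two, rot2_pi',
    smul_prod', add_prod', Prod.mk.injEq]
  constructor <;> ring

lemma key5 (p : ℝ × ℝ) : exF (exPhi 5 p) = exPhi 8 (exPhi 8 p) := by
  simp only [exF, exPhi5_eq, exPhi8_eq, rot2_pi', smul_prod', add_prod', Prod.mk.injEq]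
  constructor <;> ring

lemma key6 (p : ℝ × ℝ) : exF (exPhi 6 p) = exPhi 8 (exPhi 7 p) := by
  simp only [exF, exPhi6_eq, exPhi8_eq, exPhi7_eq, rot2_pi_div_two, rot2_three_pi_div_two,
    rot2_pi', smul_prod', add_prod', Prod.mk.injEq]
  constructor <;> ring

lemma key7 (p : ℝ × ℝ) : exF (exPhi 7 p) = exPhi 8 (exPhi 6 p) := by
  simp only [exF, exPhi7_eq, exPhi8_eq, exPhi6_eq, rot2_pi_div_two, rot2_three_pi_div_two,
    rot2_pi', smul_prod', add_prod', Prod.mk.injEq]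
  constructor <;> ring

lemma key8 (p : ℝ × ℝ) : exF (exPhi 8 p) = exPhi 8 (exPhi 5 p) := by
  simp only [exF, exPhi8_eq, exPhi5_eq, rot2_pi', smul_prod', add_prod', Prod.mk.injEq]
  constructor <;> ring

lemma dist_exPhi5 (a b : ℝ × ℝ) : dist (exPhi 5 a) (exPhi 5 b) = (1/6) * dist a b := by
  rw [exPhi5_eq]
  simp only
  rw [dist_add_right, dist_smul₀]
  norm_num

/-- **Example 2.6 (Xiao), self-embedding.** For the attractor `K` of the IFS
`{φ_1, …, φ_9}` and `f(x) = x/6 + (15/8, −15/8)`, one has `f(K) ⊆ K`. -/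
theorem example_selfEmbedding
    (K : Set (ℝ × ℝ)) (hKne : K.Nonempty) (hKcpt : IsCompact K)
    (hK : K = ⋃ i, exPhi i '' K) :
    exF '' K ⊆ K := by
  have hclosed : IsClosed K := hKcpt.isClosed
  have hsub : ∀ i : Fin 9, ∀ y ∈ K, exPhi i y ∈ K := by
    intro i y hy
    rw [hK]
    exact Set.mem_iUnion.2 ⟨i, ⟨y, hy, rfl⟩⟩
  have hf : Continuous exF := by
    unfold exF
    exact ((continuous_id : Continuous (id : ℝ × ℝ → ℝ × ℝ)).const_smul (1/6 : ℝ)).add continuous_const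
  obtain ⟨x0, hx0, hmax⟩ := hKcpt.exists_isMaxOn hKne
    ((Metric.continuous_infDist_pt K).comp hf).continuousOn
  have hzero : Metric.infDist (exF x0) K = 0 := by
    have hx0' : x0 ∈ ⋃ i, exPhi i '' K := hK ▸ hx0
    rw [Set.mem_iUnion] at hx0'
    obtain ⟨i, y, hy, hxy⟩ := hx0'
    rw [← hxy]
    fin_cases i
    · -- i = 0 : exF x0 = exPhi 5 (exF y)
      show Metric.infDist (exF (exPhi 0 y)) K = 0
      have h2 : Metric.infDist (exF y) K ≤ Metric.infDist (exF (exPhi 0 y)) K := by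
        have := hmax hy
        rw [← hxy] at this
        exact this
      rw [key0 y] at h2 ⊢
      obtain ⟨q, hq, hdq⟩ := hKcpt.exists_infDist_eq_dist hKne (exF y)
      have h1 : Metric.infDist (exPhi 5 (exF y)) K ≤ dist (exPhi 5 (exF y)) (exPhi 5 q) :=
        Metric.infDist_le_dist_of_mem (hsub 5 q hq)
      rw [dist_exPhi5, ← hdq] at h1
      have h3 : (0:ℝ) ≤ Metric.infDist (exPhi 5 (exF y)) K := Metric.infDist_nonneg
      linarith
    · show Metric.infDist (exF (exPhi 1 y)) K = 0
      rw [key1 y]; exact Metric.infDist_zero_of_mem (hsub 7 _ (hsub 6 y hy))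
    · show Metric.infDist (exF (exPhi 2 y)) K = 0
      rw [key2 y]; exact Metric.infDist_zero_of_mem (hsub 7 _ (hsub 8 y hy))
    · show Metric.infDist (exF (exPhi 3 y)) K = 0
      rw [key3 y]; exact Metric.infDist_zero_of_mem (hsub 7 _ (hsub 5 y hy))
    · show Metric.infDist (exF (exPhi 4 y)) K = 0
      rw [key4 y]; exact Metric.infDist_zero_of_mem (hsub 7 _ (hsub 7 y hy))
    · show Metric.infDist (exF (exPhi 5 y)) K = 0
      rw [key5 y]; exact Metric.infDist_zero_of_mem (hsub 8 _ (hsub 8 y hy))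
    · show Metric.infDist (exF (exPhi 6 y)) K = 0
      rw [key6 y]; exact Metric.infDist_zero_of_mem (hsub 8 _ (hsub 7 y hy))
    · show Metric.infDist (exF (exPhi 7 y)) K = 0
      rw [key7 y]; exact Metric.infDist_zero_of_mem (hsub 8 _ (hsub 6 y hy))
    · show Metric.infDist (exF (exPhi 8 y)) K = 0
      rw [key8 y]; exact Metric.infDist_zero_of_mem (hsub 8 _ (hsub 5 y hy))
  rintro z ⟨x, hx, rfl⟩
  have h0 : Metric.infDist (exF x) K = 0 := by
    have h1 : Metric.infDist (exF x) K ≤ Metric.infDist (exF x0) K := hmax hx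
    have h3 : (0:ℝ) ≤ Metric.infDist (exF x) K := Metric.infDist_nonneg
    linarith [hzero ▸ h1]
  exact (hclosed.mem_iff_infDist_zero hKne).2 h0
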